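/- Let T be a topological space in which every point has a neighborhood basis, and let S¹, S² : ℝ^n → Set ℝ^d (with T = ℝ^n Euclidean) be inner semicontinuous convex-valued mappings such that 0 ∈ interior(S¹ t − S² t) for all t. Then t ↦ S¹ t ∩ S² t is inner semicontinuous. -/

import Mathlib

open Pointwise Filter

lemma aux_sep {d : ℕ} (A B : Set (Fin d → ℝ)) (hA : Convex ℝ A) (hB : Convex ℝ B)
    (hAc : IsCompact A) (hBc : IsCompact B) (c η : ℝ) (hc : 0 < c) (hη : 0 < η)
    (hsmall : 8 * (d + 1) * η ≤ c)
    (w0 : ∃ p ∈ A, ∃ q ∈ B, ‖p - q‖ ≤ 2 * η)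
    (hw : ∀ i : Fin d, ∀ s : Bool, ∃ p ∈ A, ∃ q ∈ B,
      ‖p - q - Pi.single i (if s then c else -c)‖ ≤ 2 * η) :
    (A ∩ B).Nonempty := by
  by_contra hdisj
  rw [Set.not_nonempty_iff_eq_empty, ← Set.disjoint_iff_inter_eq_empty] at hdisj
  have h0 : (0 : Fin d → ℝ) ∉ A - B := by
    rw [Set.zero_mem_sub_iff]; exact fun h => h hdisj
  have hABc : IsCompact (A - B) := by
    rw [← Set.sub_image_prod]; exact (hAc.prod hBc).image continuous_sub
  obtain ⟨f, u, hfu, hsep⟩ :=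
    geometric_hahn_banach_point_closed (hA.sub hB) hABc.isClosed h0
  rw [map_zero] at hfu
  obtain ⟨p0, hp0, q0, hq0, hpq0⟩ := w0
  have hu0 : u < f (p0 - q0) := hsep _ (Set.sub_mem_sub hp0 hq0)
  have hfpos : 0 < ‖f‖ := by
    rw [norm_pos_iff]
    intro hf0
    rw [hf0] at hu0
    simp at hu0
    linarith
  have hfbd : ∀ y : Fin d → ℝ, |f y| ≤ ‖f‖ * ‖y‖ := fun y => f.le_opNorm y
  have hsingle : ∀ (i : Fin d) (r : ℝ),
      f (Pi.single i r) = r * f (Pi.single i (1 : ℝ)) := by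
    intro i r
    have h : (Pi.single i r : Fin d → ℝ) = r • (Pi.single i (1 : ℝ) : Fin d → ℝ) := by
      rw [← Pi.single_smul, smul_eq_mul, mul_one]
    rw [h, map_smul, smul_eq_mul]
  have key : ∀ i : Fin d, |f (Pi.single i (1 : ℝ))| ≤ 2 * η * ‖f‖ / c := by
    intro i
    have hs : ∀ s : Bool,
        -(2 * η * ‖f‖) ≤ f (Pi.single i (if s then c else -c)) := by
      intro s
      obtain ⟨p, hp, q, hq, hpq⟩ := hw i s
      have h1 : u < f (p - q) := hsep _ (Set.sub_mem_sub hp hq)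
      have h2 : |f (p - q) - f (Pi.single i (if s then c else -c))| ≤ 2 * η * ‖f‖ := by
        rw [← map_sub]
        calc |f (p - q - Pi.single i (if s then c else -c))|
            ≤ ‖f‖ * ‖p - q - Pi.single i (if s then c else -c)‖ := hfbd _
          _ ≤ ‖f‖ * (2 * η) := mul_le_mul_of_nonneg_left hpq (norm_nonneg f)
          _ = 2 * η * ‖f‖ := by ring
      have h3 := abs_le.mp h2
      linarith
    have ht := hs true
    have hf := hs false
    norm_num at ht hf
    rw [hsingle] at ht hf
    set g := f (Pi.single i (1 : ℝ)) with hg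
    have habs : |g| * c ≤ 2 * η * ‖f‖ := by
      rcases abs_cases g with ⟨h, _⟩ | ⟨h, _⟩ <;> rw [h] <;> nlinarith
    rw [le_div_iff₀ hc]
    exact habs
  have hnorm : ‖f‖ ≤ ∑ i : Fin d, |f (Pi.single i (1 : ℝ))| := by
    apply f.opNorm_le_bound
    · exact Finset.sum_nonneg fun i _ => abs_nonneg _
    · intro y
      have hy : f y = ∑ i : Fin d, y i * f (Pi.single i (1 : ℝ)) := by
        conv_lhs => rw [← Finset.univ_sum_single y]
        rw [map_sum]
        exact Finset.sum_congr rfl fun i _ => hsingle i (y i)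
      rw [Real.norm_eq_abs, hy]
      calc |∑ i : Fin d, y i * f (Pi.single i (1 : ℝ))|
          ≤ ∑ i : Fin d, |y i * f (Pi.single i (1 : ℝ))| := Finset.abs_sum_le_sum_abs _ _
        _ ≤ ∑ i : Fin d, ‖y‖ * |f (Pi.single i (1 : ℝ))| := by
            apply Finset.sum_le_sum
            intro i _
            rw [abs_mul]
            apply mul_le_mul_of_nonneg_right _ (abs_nonneg _)
            exact (Real.norm_eq_abs (y i)) ▸ norm_le_pi_norm y i
        _ = (∑ i : Fin d, |f (Pi.single i (1 : ℝ))|) * ‖y‖ := by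
            rw [← Finset.mul_sum]; ring
  have hsum : ∑ i : Fin d, |f (Pi.single i (1 : ℝ))| ≤ d * (2 * η * ‖f‖ / c) := by
    calc ∑ i : Fin d, |f (Pi.single i (1 : ℝ))|
        ≤ ∑ _i : Fin d, 2 * η * ‖f‖ / c := Finset.sum_le_sum fun i _ => key i
      _ = d * (2 * η * ‖f‖ / c) := by
          rw [Finset.sum_const, Finset.card_univ, Fintype.card_fin, nsmul_eq_mul]
  have hfin : ‖f‖ ≤ d * (2 * η * ‖f‖) / c := by
    have := le_trans hnorm hsum
    rw [show (d : ℝ) * (2 * η * ‖f‖ / c) = d * (2 * η * ‖f‖) / c from by ring] at this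
    exact this
  have hd : (0 : ℝ) ≤ d := Nat.cast_nonneg d
  rw [le_div_iff₀ hc] at hfin
  nlinarith

/-- Sequential (Painlevé–Kuratowski) inner semicontinuity on Euclidean spaces:
for every sequence `tseq → t`, `S t ⊆ liminf_ν S (tseq ν)`. -/
def SeqInnerSemicont {n d : ℕ} (S : (Fin n → ℝ) → Set (Fin d → ℝ)) : Prop :=
  ∀ t : Fin n → ℝ, ∀ tseq : ℕ → Fin n → ℝ, Tendsto tseq atTop (nhds t) →
    ∀ x ∈ S t, ∀ ε : ℝ, 0 < ε →
      ∀ᶠ ν in atTop, (S (tseq ν) ∩ Metric.ball x ε).Nonempty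

theorem inter_seqInnerSemicont {n d : ℕ}
    (S1 S2 : (Fin n → ℝ) → Set (Fin d → ℝ))
    (h1 : SeqInnerSemicont S1) (h2 : SeqInnerSemicont S2)
    (hc1 : ∀ t, Convex ℝ (S1 t)) (hc2 : ∀ t, Convex ℝ (S2 t))
    (hint : ∀ t, (0 : Fin d → ℝ) ∈ interior (S1 t - S2 t)) :
    SeqInnerSemicont (fun t => S1 t ∩ S2 t) := by
  intro t tseq htt x hx ε hε
  obtain ⟨hx1, hx2⟩ := hx
  obtain ⟨δ, hδpos, hδball⟩ := Metric.mem_nhds_iff.mp (mem_interior_iff_mem_nhds.mp (hint t))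
  -- the 2d "direction" points
  have hv : ∀ (i : Fin d) (s : Bool),
      (Pi.single i (if s then δ / 2 else -(δ / 2)) : Fin d → ℝ) ∈ S1 t - S2 t := by
    intro i s
    apply hδball
    rw [Metric.mem_ball, dist_zero_right]
    have hbd : ‖(Pi.single i (if s then δ / 2 else -(δ / 2)) : Fin d → ℝ)‖ ≤ δ / 2 := by
      refine (pi_norm_le_iff_of_nonneg (by positivity)).2 fun j => ?_
      rcases eq_or_ne i j with h | h
      · subst h
        rw [Pi.single_eq_same, Real.norm_eq_abs]
        cases s <;> simp only [if_true, if_false, Bool.false_eq_true, abs_neg] <;>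
          rw [abs_of_nonneg (by linarith)]
      · rw [Pi.single_eq_of_ne' h, norm_zero]; linarith
    linarith
  have hv' : ∀ (i : Fin d) (s : Bool), ∃ p ∈ S1 t, ∃ q ∈ S2 t,
      p - q = (Pi.single i (if s then δ / 2 else -(δ / 2)) : Fin d → ℝ) := by
    intro i s
    obtain ⟨p, hp, q, hq, hpq⟩ := Set.mem_sub.mp (hv i s)
    exact ⟨p, hp, q, hq, hpq⟩
  choose a ha b hb hab using hv'
  -- scale factor
  set M : ℝ := 1 + ∑ p : Fin d × Bool, (‖a p.1 p.2 - x‖ + ‖b p.1 p.2 - x‖) with hM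
  have hMsum : (0:ℝ) ≤ ∑ p : Fin d × Bool, (‖a p.1 p.2 - x‖ + ‖b p.1 p.2 - x‖) :=
    Finset.sum_nonneg fun p _ => by positivity
  have hM1 : (1:ℝ) ≤ M := by simp only [hM]; linarith
  have hMbd : ∀ (i : Fin d) (s : Bool), ‖a i s - x‖ ≤ M ∧ ‖b i s - x‖ ≤ M := by
    intro i s
    have h := Finset.single_le_sum
      (f := fun p : Fin d × Bool => ‖a p.1 p.2 - x‖ + ‖b p.1 p.2 - x‖)
      (fun p _ => by positivity) (Finset.mem_univ (i, s))
    simp only at h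
    have hterm : ‖a i s - x‖ + ‖b i s - x‖ ≤ M := by
      rw [hM]; linarith
    exact ⟨by linarith [norm_nonneg (b i s - x)], by linarith [norm_nonneg (a i s - x)]⟩
  set lam : ℝ := min 1 (ε / (4 * M)) with hlam
  have hMpos : (0:ℝ) < M := by linarith
  have hlam0 : 0 < lam := lt_min one_pos (by positivity)
  have hlam1 : lam ≤ 1 := min_le_left _ _
  have hlamM : lam * M ≤ ε / 4 := by
    calc lam * M ≤ (ε / (4 * M)) * M := by
          exact mul_le_mul_of_nonneg_right (min_le_right _ _) (le_of_lt hMpos)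
      _ = ε / 4 := by field_simp
  set c : ℝ := lam * (δ / 2) with hcdef
  have hc : 0 < c := by positivity
  set η : ℝ := min (ε / 8) (c / (8 * (d + 1))) with hη
  have hηpos : 0 < η := lt_min (by linarith) (by positivity)
  have hηε : η ≤ ε / 8 := min_le_left _ _
  have hηc : 8 * ((d:ℝ) + 1) * η ≤ c := by
    have h := min_le_right (ε / 8) (c / (8 * ((d:ℝ) + 1)))
    rw [← hη] at h
    rw [mul_comm]
    rw [← le_div_iff₀ (by positivity)]
    exact h
  -- scaled points
  set a' : Fin d → Bool → (Fin d → ℝ) := fun i s => (1 - lam) • x + lam • a i s with ha'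
  set b' : Fin d → Bool → (Fin d → ℝ) := fun i s => (1 - lam) • x + lam • b i s with hb'
  have ha'mem : ∀ i s, a' i s ∈ S1 t := fun i s =>
    hc1 t hx1 (ha i s) (by linarith) (le_of_lt hlam0) (by ring)
  have hb'mem : ∀ i s, b' i s ∈ S2 t := fun i s =>
    hc2 t hx2 (hb i s) (by linarith) (le_of_lt hlam0) (by ring)
  have hdiff : ∀ i s, a' i s - b' i s = Pi.single i (if s then c else -c) := by
    intro i s
    have h1 : a' i s - b' i s = lam • (a i s - b i s) := by
      simp only [ha', hb']
      rw [smul_sub]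
      abel
    rw [h1, hab i s, ← Pi.single_smul]
    congr 1
    cases s <;> simp [smul_eq_mul, hcdef] <;> ring
  have ha'x : ∀ i s, ‖a' i s - x‖ ≤ ε / 4 := by
    intro i s
    have h1 : a' i s - x = lam • (a i s - x) := by
      simp only [ha']; rw [smul_sub]; module
    rw [h1, norm_smul, Real.norm_eq_abs, abs_of_pos hlam0]
    calc lam * ‖a i s - x‖ ≤ lam * M :=
          mul_le_mul_of_nonneg_left (hMbd i s).1 (le_of_lt hlam0)
      _ ≤ ε / 4 := hlamM
  have hb'x : ∀ i s, ‖b' i s - x‖ ≤ ε / 4 := by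
    intro i s
    have h1 : b' i s - x = lam • (b i s - x) := by
      simp only [hb']; rw [smul_sub]; module
    rw [h1, norm_smul, Real.norm_eq_abs, abs_of_pos hlam0]
    calc lam * ‖b i s - x‖ ≤ lam * M :=
          mul_le_mul_of_nonneg_left (hMbd i s).2 (le_of_lt hlam0)
      _ ≤ ε / 4 := hlamM
  -- eventual approximations
  have E1 : ∀ᶠ ν in atTop, ∀ p : Fin d × Bool,
      (S1 (tseq ν) ∩ Metric.ball (a' p.1 p.2) η).Nonempty :=
    eventually_all.2 fun p => h1 t tseq htt _ (ha'mem p.1 p.2) η hηpos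
  have E2 : ∀ᶠ ν in atTop, ∀ p : Fin d × Bool,
      (S2 (tseq ν) ∩ Metric.ball (b' p.1 p.2) η).Nonempty :=
    eventually_all.2 fun p => h2 t tseq htt _ (hb'mem p.1 p.2) η hηpos
  have E1x : ∀ᶠ ν in atTop, (S1 (tseq ν) ∩ Metric.ball x η).Nonempty :=
    h1 t tseq htt x hx1 η hηpos
  have E2x : ∀ᶠ ν in atTop, (S2 (tseq ν) ∩ Metric.ball x η).Nonempty :=
    h2 t tseq htt x hx2 η hηpos
  filter_upwards [E1, E2, E1x, E2x] with ν H1 H2 Hx1 Hx2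
  choose pa hpa1 hpa2 using fun p : Fin d × Bool => H1 p
  choose pb hpb1 hpb2 using fun p : Fin d × Bool => H2 p
  obtain ⟨z1, hz1S, hz1b⟩ := Hx1
  obtain ⟨z2, hz2S, hz2b⟩ := Hx2
  set A : Set (Fin d → ℝ) := convexHull ℝ (insert z1 (Set.range pa)) with hA
  set B : Set (Fin d → ℝ) := convexHull ℝ (insert z2 (Set.range pb)) with hB
  have hAS : A ⊆ S1 (tseq ν) :=
    convexHull_min (Set.insert_subset hz1S (Set.range_subset_iff.2 fun p => hpa1 p)) (hc1 _)
  have hBS : B ⊆ S2 (tseq ν) :=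
    convexHull_min (Set.insert_subset hz2S (Set.range_subset_iff.2 fun p => hpb1 p)) (hc2 _)
  have hAball : A ⊆ Metric.ball x ε := by
    apply convexHull_min _ (convex_ball x ε)
    apply Set.insert_subset
    · exact Metric.mem_ball.2 (lt_of_lt_of_le (Metric.mem_ball.1 hz1b) (by linarith))
    · rw [Set.range_subset_iff]
      intro p
      rw [Metric.mem_ball, dist_eq_norm]
      have h1 : ‖pa p - a' p.1 p.2‖ < η := by
        rw [← dist_eq_norm]; exact Metric.mem_ball.1 (hpa2 p)
      calc ‖pa p - x‖ = ‖(pa p - a' p.1 p.2) + (a' p.1 p.2 - x)‖ := by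
            rw [sub_add_sub_cancel]
        _ ≤ ‖pa p - a' p.1 p.2‖ + ‖a' p.1 p.2 - x‖ := norm_add_le _ _
        _ < ε := by linarith [ha'x p.1 p.2]
  -- apply the separation lemma
  obtain ⟨z, hzA, hzB⟩ := aux_sep A B (convex_convexHull ℝ _) (convex_convexHull ℝ _)
    (((Set.finite_range pa).insert z1).isCompact_convexHull ℝ)
    (((Set.finite_range pb).insert z2).isCompact_convexHull ℝ)
    c η hc hηpos hηc
    ⟨z1, subset_convexHull ℝ _ (Set.mem_insert _ _), z2,
      subset_convexHull ℝ _ (Set.mem_insert _ _), by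
        have ha1 : ‖z1 - x‖ < η := by rw [← dist_eq_norm]; exact Metric.mem_ball.1 hz1b
        have ha2 : ‖z2 - x‖ < η := by rw [← dist_eq_norm]; exact Metric.mem_ball.1 hz2b
        calc ‖z1 - z2‖ = ‖(z1 - x) - (z2 - x)‖ := by rw [sub_sub_sub_cancel_right]
          _ ≤ ‖z1 - x‖ + ‖z2 - x‖ := norm_sub_le _ _
          _ ≤ 2 * η := by linarith⟩
    (by
      intro i s
      refine ⟨pa (i, s), subset_convexHull ℝ _ (Set.mem_insert_of_mem _ ⟨(i, s), rfl⟩),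
        pb (i, s), subset_convexHull ℝ _ (Set.mem_insert_of_mem _ ⟨(i, s), rfl⟩), ?_⟩
      have ha1 : ‖pa (i, s) - a' i s‖ < η := by
        rw [← dist_eq_norm]; exact Metric.mem_ball.1 (hpa2 (i, s))
      have ha2 : ‖pb (i, s) - b' i s‖ < η := by
        rw [← dist_eq_norm]; exact Metric.mem_ball.1 (hpb2 (i, s))
      have heq : pa (i, s) - pb (i, s) - Pi.single i (if s then c else -c)
          = (pa (i, s) - a' i s) - (pb (i, s) - b' i s) := by
        rw [← hdiff i s]; abel
      rw [heq]
      calc ‖(pa (i, s) - a' i s) - (pb (i, s) - b' i s)‖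
          ≤ ‖pa (i, s) - a' i s‖ + ‖pb (i, s) - b' i s‖ := norm_sub_le _ _
        _ ≤ 2 * η := by linarith)
  exact ⟨z, ⟨hAS hzA, hBS hzB⟩, hAball hzA⟩
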